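/- Let G₁₃ be the graph whose vertices are the 13 lines through the origin in ℝ³ spanned by nonzero vectors with entries in {−1,0,1}, with two vertices adjacent iff the corresponding vectors are orthogonal. Then the independence number of G₁₃ is 5. -/

import Mathlib

open Finset

/-- Representatives of the 13 lines through the origin in ℝ³ spanned by
nonzero `{-1,0,1}`-vectors. -/
def g13vec : Fin 13 → Fin 3 → ℤ :=
  ![![1,0,0], ![0,1,0], ![0,0,1],
    ![1,1,0], ![1,-1,0], ![1,0,1], ![1,0,-1], ![0,1,1], ![0,1,-1],
    ![1,1,1], ![1,1,-1], ![1,-1,1], ![-1,1,1]]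

/-- The orthogonality graph on the 13 lines. -/
def G13 : SimpleGraph (Fin 13) :=
  SimpleGraph.fromRel (fun u v => ∑ i, g13vec u i * g13vec v i = 0)

instance G13.adjDecidable (u v : Fin 13) : Decidable (G13.Adj u v) :=
  decidable_of_iff (u ≠ v ∧ ((∑ i, g13vec u i * g13vec v i = 0) ∨ (∑ i, g13vec v i * g13vec u i = 0)))
    (by rw [G13, SimpleGraph.fromRel_adj])

/-- Adjacency of `G13` encoded as a bitmask on `ℕ`. -/
def adjN : ℕ → ℕ → Bool := fun u v =>
  (27040010604756267023263249181211668917144741781894 >>> (u*13+v)) % 2 == 1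

set_option maxRecDepth 10000 in
lemma adj_iff : ∀ u v : Fin 13, G13.Adj u v ↔ adjN u.val v.val = true := by decide

set_option maxRecDepth 10000 in
lemma no6 : ∀ F < 13, ∀ E < F, ∀ D < E, ∀ C < D, ∀ B < C, ∀ A < B,
    (adjN A B || adjN A C || adjN A D || adjN A E || adjN A F ||
     adjN B C || adjN B D || adjN B E || adjN B F ||
     adjN C D || adjN C E || adjN C F ||
     adjN D E || adjN D F || adjN E F) = true := by decide

theorem G13_independence_number :
    (∃ S : Finset (Fin 13), S.card = 5 ∧ ∀ u ∈ S, ∀ v ∈ S, ¬ G13.Adj u v) ∧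
    (∀ S : Finset (Fin 13), (∀ u ∈ S, ∀ v ∈ S, ¬ G13.Adj u v) → S.card ≤ 5) := by
  constructor
  · exact ⟨{0, 9, 10, 11, 12}, by decide, by decide⟩
  · intro S hS
    by_contra h
    push_neg at h
    obtain ⟨T, hTS, hT6⟩ := Finset.exists_subset_card_eq h
    have hlen : (T.sort (· ≤ ·)).length = 6 := by rw [Finset.length_sort, hT6]
    obtain ⟨a, b, c, d, e, f, hl⟩ : ∃ a b c d e f : Fin 13,
        T.sort (· ≤ ·) = [a, b, c, d, e, f] := by
      rcases hh : T.sort (· ≤ ·) with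
        _ | ⟨a, _ | ⟨b, _ | ⟨c, _ | ⟨d, _ | ⟨e, _ | ⟨f, _ | ⟨g, r⟩⟩⟩⟩⟩⟩⟩ <;>
        first
          | (exact ⟨_, _, _, _, _, _, rfl⟩)
          | (exfalso; rw [hh] at hlen; simp at hlen)
    have hs := List.sortedLT_iff_pairwise.mp T.sortedLT_sort
    rw [hl] at hs
    simp only [List.pairwise_cons, List.mem_cons, List.mem_singleton,
      List.not_mem_nil, List.Pairwise.nil, and_true] at hs
    have hmem : ∀ x ∈ ([a, b, c, d, e, f] : List (Fin 13)), x ∈ S := by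
      intro x hx
      exact hTS ((Finset.mem_sort _).mp (by rw [hl]; exact hx))
    have ha := hmem a (by simp); have hb := hmem b (by simp)
    have hc := hmem c (by simp); have hd := hmem d (by simp)
    have he := hmem e (by simp); have hf := hmem f (by simp)
    have nf : ∀ u ∈ S, ∀ v ∈ S, adjN u.val v.val = false := by
      intro u hu v hv
      exact eq_false_of_ne_true (fun hh => hS u hu v hv ((adj_iff u v).mpr hh))
    have h1 : a < b := hs.1 b (by simp)
    have h2 : b < c := hs.2.1 c (by simp)
    have h3 : c < d := hs.2.2.1 d (by simp)
    have h4 : d < e := hs.2.2.2.1 e (by simp)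
    have h5 : e < f := hs.2.2.2.2.1 f (by simp)
    have key := no6 f.val f.isLt e.val (Fin.lt_def.mp h5) d.val (Fin.lt_def.mp h4)
      c.val (Fin.lt_def.mp h3) b.val (Fin.lt_def.mp h2) a.val (Fin.lt_def.mp h1)
    rw [nf a ha b hb, nf a ha c hc, nf a ha d hd, nf a ha e he, nf a ha f hf,
      nf b hb c hc, nf b hb d hd, nf b hb e he, nf b hb f hf,
      nf c hc d hd, nf c hc e he, nf c hc f hf,
      nf d hd e he, nf d hd f hf, nf e he f hf] at key
    simp at key
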